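/- Let k, γ, ε, m₀, m₁ be real numbers with m₀ > 0, m₁ > 0, ε ≥ 0, k > 0 and 2k > γ. Let M : ℝ → (6×6 real matrices) be a differentiable matrix-valued function such that for every t: M(t) is symmetric and invertible, m₀‖x‖² ≤ xᵀ M(t) x ≤ m₁‖x‖² for all x ∈ ℝ⁶, and |xᵀ M'(t) x| ≤ γ‖x‖² for all x ∈ ℝ⁶. Let Δ : ℝ → ℝ⁶ satisfy ‖Δ(t)‖ ≤ ε for all t, and let e : ℝ → ℝ⁶ be differentiable with e'(t) = -k · M(t)⁻¹ · e(t) - k · M(t)⁻¹ · Δ(t) for all t. Then there exists a constant C ≥ 0 such that ‖e(t)‖ ≤ C for all t ≥ 0; that is, the observer error remains bounded in forward time. -/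

import Mathlib

open Matrix

/-- Euclidean norm of a vector in `ℝⁿ` (identified with `Fin n → ℝ`). -/
noncomputable def eNorm {n : ℕ} (x : Fin n → ℝ) : ℝ := Real.sqrt (x ⬝ᵥ x)

/-- Entrywise derivative of a matrix-valued function. -/
noncomputable def matDeriv {n : ℕ} (M : ℝ → Matrix (Fin n) (Fin n) ℝ) (t : ℝ) :
    Matrix (Fin n) (Fin n) ℝ :=
  Matrix.of fun i j => deriv (fun s => M s i j) t

lemma dot_self_nonneg' {n : ℕ} (x : Fin n → ℝ) : 0 ≤ x ⬝ᵥ x :=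
  Finset.sum_nonneg fun i _ => mul_self_nonneg (x i)

lemma eNorm_nonneg' {n : ℕ} (x : Fin n → ℝ) : 0 ≤ eNorm x := Real.sqrt_nonneg _

lemma eNorm_sq' {n : ℕ} (x : Fin n → ℝ) : eNorm x ^ 2 = x ⬝ᵥ x :=
  Real.sq_sqrt (dot_self_nonneg' x)

lemma abs_dot_le' {n : ℕ} (x y : Fin n → ℝ) : |x ⬝ᵥ y| ≤ eNorm x * eNorm y := by
  have h1 : ∀ z w : Fin n → ℝ, z ⬝ᵥ w ≤ eNorm z * eNorm w := by
    intro z w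
    have := Real.sum_mul_le_sqrt_mul_sqrt Finset.univ z w
    simpa [eNorm, dotProduct, sq] using this
  rcases abs_cases (x ⬝ᵥ y) with ⟨h, _⟩ | ⟨h, _⟩
  · rw [h]; exact h1 x y
  · rw [h]
    have := h1 (-x) y
    have hne : eNorm (-x) = eNorm x := by simp [eNorm, dotProduct]
    simpa [neg_dotProduct, hne] using this

lemma hasDerivAt_V' {M : ℝ → Matrix (Fin 6) (Fin 6) ℝ}
    (hMdiff : ∀ i j, Differentiable ℝ fun t => M t i j)
    {e : ℝ → Fin 6 → ℝ} (he : Differentiable ℝ e) (t : ℝ) :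
    HasDerivAt (fun s => e s ⬝ᵥ (M s).mulVec (e s))
      (deriv e t ⬝ᵥ (M t).mulVec (e t) + e t ⬝ᵥ (matDeriv M t).mulVec (e t)
        + e t ⬝ᵥ (M t).mulVec (deriv e t)) t := by
  have hei : ∀ i, HasDerivAt (fun s => e s i) (deriv e t i) t := fun i =>
    hasDerivAt_pi.1 (he t).hasDerivAt i
  have hM : ∀ i j, HasDerivAt (fun s => M s i j) (matDeriv M t i j) t := fun i j =>
    ((hMdiff i j) t).hasDerivAt
  have h : HasDerivAt (fun s => ∑ i, ∑ j, e s i * (M s i j * e s j))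
      (∑ i, ∑ j, (deriv e t i * (M t i j * e t j)
        + e t i * (matDeriv M t i j * e t j + M t i j * deriv e t j))) t := by
    apply HasDerivAt.fun_sum
    intro i _
    apply HasDerivAt.fun_sum
    intro j _
    exact (hei i).mul ((hM i j).mul (hei j))
  have efun : (fun s => ∑ i, ∑ j, e s i * (M s i j * e s j))
      = fun s => e s ⬝ᵥ (M s).mulVec (e s) := by
    funext s
    simp [dotProduct, mulVec, Finset.mul_sum]
  rw [efun] at h
  convert h using 1
  simp only [dotProduct, mulVec, of_apply, Finset.mul_sum, Finset.sum_add_distrib]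
  simp only [mul_add, Finset.sum_add_distrib]
  ring

open Set in
lemma gron_aux' {V V' : ℝ → ℝ} {K A : ℝ} (hV : ∀ t, HasDerivAt V (V' t) t)
    (hb : ∀ t, V' t ≤ K * V t + A) {t : ℝ} (ht : 0 ≤ t) :
    V t ≤ gronwallBound (V 0) K A t := by
  have frq : ∀ x ∈ Ico (0:ℝ) t, ∀ r, V' x < r →
      ∃ᶠ z in nhdsWithin x (Ioi x), (z - x)⁻¹ * (V z - V x) < r := by
    intro x _ r hr
    have hd : HasDerivWithinAt V (V' x) (Ioi x) x := (hV x).hasDerivWithinAt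
    rw [hasDerivWithinAt_iff_tendsto_slope] at hd
    have hset : Ioi x \ {x} = Ioi x := by
      ext z; simp only [mem_diff, mem_Ioi, mem_singleton_iff, and_iff_left_iff_imp]
      intro h; exact ne_of_gt h
    rw [hset] at hd
    have hev : ∀ᶠ z in nhdsWithin x (Ioi x), slope V x z < r :=
      hd.eventually (gt_mem_nhds hr)
    refine (hev.mono ?_).frequently
    intro z hz
    simpa [slope_def_field, div_eq_inv_mul] using hz
  have := le_gronwallBound_of_liminf_deriv_right_le (f := V) (f' := V') (a := 0) (b := t)
    (fun x _ => (hV x).continuousAt.continuousWithinAt) frq le_rfl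
    (fun x _ => hb x) t ⟨ht, le_rfl⟩
  simpa using this

lemma gronwallBound_le' {δ K A s : ℝ} (hδ : 0 ≤ δ) (hK : K < 0) (hA : 0 ≤ A) (hs : 0 ≤ s) :
    gronwallBound δ K A s ≤ δ + A / (-K) := by
  have h1 : Real.exp (K * s) ≤ 1 := Real.exp_le_one_iff.2 (mul_nonpos_of_nonpos_of_nonneg hK.le hs)
  have h2 : 0 < Real.exp (K * s) := Real.exp_pos _
  have h3 : A / K * (Real.exp (K * s) - 1) = A / (-K) * (1 - Real.exp (K * s)) := by
    field_simp
    ring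
  have h4 : (0:ℝ) ≤ A / (-K) := div_nonneg hA (by linarith)
  simp only [gronwallBound_of_K_ne_0 hK.ne]
  rw [h3]
  nlinarith

/-- robustness conclusion. Under a bounded disturbance `‖Δ‖ ≤ ε`,
gain condition `2k > γ` and uniform positive-definiteness bounds on `M`, the observer
error remains bounded in forward time. -/
theorem observer_error_bounded_under_disturbance
    (k γ ε m₀ m₁ : ℝ) (hm₀ : 0 < m₀) (hm₁ : 0 < m₁) (hε : 0 ≤ ε)
    (hkpos : 0 < k) (hk : 2 * k > γ)
    (M : ℝ → Matrix (Fin 6) (Fin 6) ℝ)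
    (hMdiff : ∀ i j, Differentiable ℝ fun t => M t i j)
    (hMsymm : ∀ t, (M t).IsSymm)
    (hMinv : ∀ t, IsUnit (M t).det)
    (hMlb : ∀ t, ∀ x : Fin 6 → ℝ, m₀ * eNorm x ^ 2 ≤ x ⬝ᵥ (M t).mulVec x)
    (hMub : ∀ t, ∀ x : Fin 6 → ℝ, x ⬝ᵥ (M t).mulVec x ≤ m₁ * eNorm x ^ 2)
    (hMrate : ∀ t, ∀ x : Fin 6 → ℝ, |x ⬝ᵥ (matDeriv M t).mulVec x| ≤ γ * eNorm x ^ 2)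
    (Δ : ℝ → Fin 6 → ℝ) (hΔ : ∀ t, eNorm (Δ t) ≤ ε)
    (e : ℝ → Fin 6 → ℝ) (he : Differentiable ℝ e)
    (hdyn : ∀ t, deriv e t = (-k) • (M t)⁻¹.mulVec (e t) - k • (M t)⁻¹.mulVec (Δ t)) :
    ∃ C : ℝ, 0 ≤ C ∧ ∀ t ≥ (0 : ℝ), eNorm (e t) ≤ C := by
  obtain ⟨c, hcdef⟩ : ∃ c : ℝ, c = 2 * k - γ := ⟨_, rfl⟩
  have hc : 0 < c := by rw [hcdef]; linarith
  obtain ⟨K, hKdef⟩ : ∃ K : ℝ, K = -(c / (2 * m₁)) := ⟨_, rfl⟩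
  have hK : K < 0 := by rw [hKdef]; rw [neg_lt, neg_zero]; positivity
  obtain ⟨A, hAdef⟩ : ∃ A : ℝ, A = 2 * k ^ 2 * ε ^ 2 / c := ⟨_, rfl⟩
  have hA : 0 ≤ A := by rw [hAdef]; positivity
  have hAc : A * c = 2 * k ^ 2 * ε ^ 2 := by
    rw [hAdef, div_mul_cancel₀ _ hc.ne']
  set V : ℝ → ℝ := fun s => e s ⬝ᵥ (M s).mulVec (e s) with hVdef
  set V' : ℝ → ℝ := fun s => deriv e s ⬝ᵥ (M s).mulVec (e s)
      + e s ⬝ᵥ (matDeriv M s).mulVec (e s) + e s ⬝ᵥ (M s).mulVec (deriv e s) with hV'def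
  have hVd : ∀ s, HasDerivAt V (V' s) s := fun s => hasDerivAt_V' hMdiff he s
  -- the key differential inequality
  have hbound : ∀ s, V' s ≤ K * V s + A := by
    intro s
    obtain ⟨r, hrdef⟩ : ∃ r : ℝ, r = eNorm (e s) := ⟨_, rfl⟩
    have hr : 0 ≤ r := hrdef ▸ eNorm_nonneg' _
    have hee : e s ⬝ᵥ e s = r ^ 2 := by rw [hrdef]; exact (eNorm_sq' _).symm
    -- M s *ᵥ deriv e s
    have hMe' : (M s).mulVec (deriv e s) = (-k) • e s - k • Δ s := by
      rw [hdyn s]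
      have h1 : (M s).mulVec ((M s)⁻¹.mulVec (e s)) = e s := by
        rw [mulVec_mulVec, Matrix.mul_nonsing_inv _ (hMinv s), one_mulVec]
      have h2 : (M s).mulVec ((M s)⁻¹.mulVec (Δ s)) = Δ s := by
        rw [mulVec_mulVec, Matrix.mul_nonsing_inv _ (hMinv s), one_mulVec]
      rw [mulVec_sub, mulVec_smul, mulVec_smul, h1, h2]
    -- symmetry
    have hsym : deriv e s ⬝ᵥ (M s).mulVec (e s) = e s ⬝ᵥ (M s).mulVec (deriv e s) := by
      rw [dotProduct_mulVec, ← mulVec_transpose, (hMsymm s).eq, dotProduct_comm]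
    have hthird : e s ⬝ᵥ (M s).mulVec (deriv e s)
        = -(k * (e s ⬝ᵥ e s)) - k * (e s ⬝ᵥ Δ s) := by
      rw [hMe']
      simp [dotProduct_sub, dotProduct_smul, smul_eq_mul]
    have hγ : e s ⬝ᵥ (matDeriv M s).mulVec (e s) ≤ γ * r ^ 2 := by
      rw [hrdef]
      exact le_of_abs_le (hMrate s (e s))
    have hcs : |e s ⬝ᵥ Δ s| ≤ r * ε := by
      rw [hrdef]
      exact (abs_dot_le' (e s) (Δ s)).trans
        (mul_le_mul_of_nonneg_left (hΔ s) (eNorm_nonneg' _))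
    have hdot : -(e s ⬝ᵥ Δ s) ≤ r * ε := (neg_le_abs _).trans hcs
    have hVub : V s ≤ m₁ * r ^ 2 := by
      rw [hrdef]
      exact hMub s (e s)
    have hKm : K * (m₁ * r ^ 2) = -(c / 2) * r ^ 2 := by
      rw [hKdef]
      field_simp
    have hKV : -(c / 2) * r ^ 2 ≤ K * V s := by
      rw [← hKm]
      exact mul_le_mul_of_nonpos_left hVub hK.le
    have hexpand : V' s = e s ⬝ᵥ (matDeriv M s).mulVec (e s)
        - 2 * k * r ^ 2 - 2 * (k * (e s ⬝ᵥ Δ s)) := by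
      show deriv e s ⬝ᵥ (M s).mulVec (e s) + e s ⬝ᵥ (matDeriv M s).mulVec (e s)
          + e s ⬝ᵥ (M s).mulVec (deriv e s) = _
      rw [hsym, hthird, hee]
      ring
    rw [hexpand]
    have htwo : 2 * k * (-(e s ⬝ᵥ Δ s)) ≤ 2 * k * (r * ε) :=
      mul_le_mul_of_nonneg_left hdot (by positivity)
    have h9 : 0 ≤ (c / 2 * r ^ 2 + A - 2 * k * (r * ε)) * c := by
      nlinarith [sq_nonneg (c * r - 2 * k * ε), hAc]
    have hyoung : 2 * k * (r * ε) ≤ c / 2 * r ^ 2 + A := by nlinarith [h9, hc]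
    have hcr : γ * r ^ 2 - 2 * k * r ^ 2 = -(c * r ^ 2) := by rw [hcdef]; ring
    have hKV2 : -(c * r ^ 2) + c / 2 * r ^ 2 ≤ K * V s := by
      have heq : -(c * r ^ 2) + c / 2 * r ^ 2 = -(c / 2) * r ^ 2 := by ring
      rw [heq]; exact hKV
    linarith [hγ, htwo, hyoung, hcr, hKV2]
  -- Gronwall
  have hV0 : 0 ≤ V 0 :=
    le_trans (mul_nonneg hm₀.le (sq_nonneg _)) (hMlb 0 (e 0))
  refine ⟨Real.sqrt ((V 0 + A / (-K)) / m₀), Real.sqrt_nonneg _, ?_⟩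
  intro t ht
  have hVt : V t ≤ V 0 + A / (-K) := by
    refine (gron_aux' hVd hbound ht).trans ?_
    exact gronwallBound_le' hV0 hK hA ht
  have h5 : m₀ * eNorm (e t) ^ 2 ≤ V 0 + A / (-K) := (hMlb t (e t)).trans hVt
  have h6 : eNorm (e t) ^ 2 ≤ (V 0 + A / (-K)) / m₀ := by
    rw [le_div_iff₀ hm₀]
    linarith [h5]
  calc eNorm (e t) = Real.sqrt (eNorm (e t) ^ 2) := (Real.sqrt_sq (eNorm_nonneg' _)).symm
    _ ≤ Real.sqrt ((V 0 + A / (-K)) / m₀) := Real.sqrt_le_sqrt h6
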